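/- Let X ∈ ℝ^d be square integrable with positive definite covariance Σ, Y real with E[Y|X] = ψ₀(α₀ᵀX), ‖α₀‖ = 1, and suppose E[X − EX | α₀ᵀX] = (α₀ᵀ(X−EX)) (α₀ᵀΣα₀)^{-1} Σα₀. Then Cov(X, Y) = c Σ α₀, where c = Cov(ψ₀(α₀ᵀX), α₀ᵀX) / (α₀ᵀΣα₀). Consequently the population linear least squares coefficient vector ᾱ = Σ^{-1} Cov(X,Y) satisfies ᾱ = c α₀. -/

import Mathlib

open Matrix MeasureTheory

section Aux

variable {Ω : Type*} [m0 : MeasurableSpace Ω] {μ : Measure Ω} [IsProbabilityMeasure μ]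

lemma aux_int_mul {f g : Ω → ℝ} (hf : MemLp f 2 μ) (hg : MemLp g 2 μ) :
    Integrable (fun ω => f ω * g ω) μ := by
  have h : MemLp (f • g) 1 μ :=
    hg.smul hf
  exact memLp_one_iff_integrable.mp h

lemma aux_integral_mul_condexp {m : MeasurableSpace Ω} (hm : m ≤ m0)
    {f g : Ω → ℝ} (hf : StronglyMeasurable[m] f)
    (hfg : Integrable (fun ω => f ω * g ω) μ) (hg : Integrable g μ) :
    ∫ ω, f ω * g ω ∂μ = ∫ ω, f ω * (μ[g|m]) ω ∂μ := by
  have hfg' : Integrable (f * g) μ := hfg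
  calc ∫ ω, f ω * g ω ∂μ = ∫ ω, (f * g) ω ∂μ := rfl
    _ = ∫ ω, (μ[f * g|m]) ω ∂μ := (integral_condExp hm).symm
    _ = ∫ ω, (f * μ[g|m]) ω ∂μ :=
        integral_congr_ae (condExp_mul_of_stronglyMeasurable_left hf hfg' hg)
    _ = ∫ ω, f ω * (μ[g|m]) ω ∂μ := rfl

end Aux

/-- Under the linear-conditional-expectation property (implied by elliptic symmetry),
`Cov(X, Y) = c Σ α₀` with `c = Cov(ψ₀(α₀ᵀX), α₀ᵀX)/(α₀ᵀΣα₀)`, and consequently the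
population linear least squares coefficient `ᾱ = Σ⁻¹Cov(X,Y)` satisfies `ᾱ = c α₀`. -/
theorem stmt8 {Ω : Type*} [m0 : MeasurableSpace Ω] {μ : Measure Ω} [IsProbabilityMeasure μ]
    {d : ℕ} (X : Ω → Fin d → ℝ) (hX : Measurable X)
    (hX2 : ∀ i, MemLp (fun ω => X ω i) 2 μ)
    (Y : Ω → ℝ) (hY : MemLp Y 2 μ)
    (EX : Fin d → ℝ) (hEX : ∀ i, ∫ ω, X ω i ∂μ = EX i)
    (Sig : Matrix (Fin d) (Fin d) ℝ) (hSig : Sig.PosDef)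
    (hcovX : ∀ i j, ∫ ω, (X ω i - EX i) * (X ω j - EX j) ∂μ = Sig i j)
    (α₀ : Fin d → ℝ) (hα₀ : α₀ ⬝ᵥ α₀ = 1)
    (ψ₀ : ℝ → ℝ) (hψ₀ : Measurable ψ₀)
    (hψ₀int : MemLp (fun ω => ψ₀ (α₀ ⬝ᵥ X ω)) 2 μ)
    (hcondY : μ[Y | MeasurableSpace.comap X inferInstance]
      =ᵐ[μ] fun ω => ψ₀ (α₀ ⬝ᵥ X ω))
    (hlin : ∀ i, (μ[fun ω => X ω i - EX i |
        MeasurableSpace.comap (fun ω => α₀ ⬝ᵥ X ω) inferInstance]) =ᵐ[μ]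
      fun ω => (α₀ ⬝ᵥ fun j => X ω j - EX j) *
        ((α₀ ⬝ᵥ Sig.mulVec α₀)⁻¹ * Sig.mulVec α₀ i)) :
    let cov : Fin d → ℝ := fun i => ∫ ω, (X ω i - EX i) * (Y ω - ∫ ω', Y ω' ∂μ) ∂μ
    let c : ℝ := (∫ ω, (ψ₀ (α₀ ⬝ᵥ X ω) - ∫ ω', ψ₀ (α₀ ⬝ᵥ X ω') ∂μ) *
        ((α₀ ⬝ᵥ X ω) - ∫ ω', α₀ ⬝ᵥ X ω' ∂μ) ∂μ) / (α₀ ⬝ᵥ Sig.mulVec α₀)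
    cov = c • Sig.mulVec α₀ ∧ Sig⁻¹.mulVec cov = c • α₀ := by
  intro cov c
  -- basic measurability
  have hXi : ∀ i, Measurable fun ω => X ω i := fun i => (measurable_pi_apply i).comp hX
  have hZmeas : ∀ i, Measurable fun ω => X ω i - EX i := fun i => (hXi i).sub measurable_const
  have hZ2 : ∀ i, MemLp (fun ω => X ω i - EX i) 2 μ := fun i => (hX2 i).sub (memLp_const _)
  have hZint : ∀ i, Integrable (fun ω => X ω i - EX i) μ :=
    fun i => (hZ2 i).integrable one_le_two
  have hZmean : ∀ i, ∫ ω, (X ω i - EX i) ∂μ = 0 := by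
    intro i
    rw [integral_sub ((hX2 i).integrable one_le_two) (integrable_const _), hEX i,
      integral_const]
    simp
  -- the index variable T = α₀ᵀ X
  set T : Ω → ℝ := fun ω => α₀ ⬝ᵥ X ω with hT_def
  have hT : Measurable T := by
    simp only [hT_def, dotProduct]
    exact Finset.measurable_sum _ fun j _ => measurable_const.mul (hXi j)
  have hT2 : MemLp T 2 μ := by
    have : MemLp (fun ω => ∑ j, α₀ j * X ω j) 2 μ :=
      memLp_finset_sum Finset.univ fun j _ => (hX2 j).const_mul (α₀ j)
    simpa [hT_def, dotProduct] using this
  have hTint : Integrable T μ := hT2.integrable one_le_two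
  have hET : ∫ ω, T ω ∂μ = α₀ ⬝ᵥ EX := by
    simp only [hT_def, dotProduct]
    rw [integral_finset_sum _ fun j _ => ((hX2 j).integrable one_le_two).const_mul (α₀ j)]
    simp_rw [integral_const_mul]
    exact Finset.sum_congr rfl fun j _ => by rw [hEX j]
  -- ψ := ψ₀ ∘ T
  set ψ : Ω → ℝ := fun ω => ψ₀ (α₀ ⬝ᵥ X ω) with hψ_def
  have hψint : Integrable ψ μ := hψ₀int.integrable one_le_two
  -- sigma algebras
  have hm₁ : (MeasurableSpace.comap X inferInstance : MeasurableSpace Ω) ≤ m0 := measurable_iff_comap_le.mp hX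
  have hm₂ : (MeasurableSpace.comap T inferInstance : MeasurableSpace Ω) ≤ m0 := measurable_iff_comap_le.mp hT
  have hXc : Measurable[(MeasurableSpace.comap X inferInstance : MeasurableSpace Ω)] X := fun s hs => ⟨s, hs, rfl⟩
  have hTc : Measurable[(MeasurableSpace.comap T inferInstance : MeasurableSpace Ω)] T := fun s hs => ⟨s, hs, rfl⟩
  -- abbreviations
  set k : Fin d → ℝ := fun i => (α₀ ⬝ᵥ Sig.mulVec α₀)⁻¹ * Sig.mulVec α₀ i with hk_def
  have hdot_sub : ∀ ω, (α₀ ⬝ᵥ fun j => X ω j - EX j) = T ω - α₀ ⬝ᵥ EX := by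
    intro ω
    simp [hT_def, dotProduct, mul_sub, Finset.sum_sub_distrib]
  -- the numerator of c
  set num : ℝ := ∫ ω, (ψ ω - ∫ ω', ψ ω' ∂μ) * (T ω - ∫ ω', T ω' ∂μ) ∂μ with hnum_def
  -- num = ∫ ψ * (T - ET)
  have hTc2 : MemLp (fun ω => T ω - α₀ ⬝ᵥ EX) 2 μ := hT2.sub (memLp_const _)
  have hTcint : Integrable (fun ω => T ω - α₀ ⬝ᵥ EX) μ := hTc2.integrable one_le_two
  have hTcmean : ∫ ω, (T ω - α₀ ⬝ᵥ EX) ∂μ = 0 := by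
    rw [integral_sub hTint (integrable_const _), hET, integral_const]; simp
  have hnum : num = ∫ ω, ψ ω * (T ω - α₀ ⬝ᵥ EX) ∂μ := by
    rw [hnum_def]
    have h1 : Integrable (fun ω => ψ ω * (T ω - α₀ ⬝ᵥ EX)) μ := aux_int_mul hψ₀int hTc2
    calc ∫ ω, (ψ ω - ∫ ω', ψ ω' ∂μ) * (T ω - ∫ ω', T ω' ∂μ) ∂μ
        = ∫ ω, (ψ ω * (T ω - α₀ ⬝ᵥ EX) - (∫ ω', ψ ω' ∂μ) * (T ω - α₀ ⬝ᵥ EX)) ∂μ := by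
          rw [hET]; congr 1; ext ω; ring
      _ = ∫ ω, ψ ω * (T ω - α₀ ⬝ᵥ EX) ∂μ
            - ∫ ω, (∫ ω', ψ ω' ∂μ) * (T ω - α₀ ⬝ᵥ EX) ∂μ := by
          rw [integral_sub h1 (hTcint.const_mul _)]
      _ = ∫ ω, ψ ω * (T ω - α₀ ⬝ᵥ EX) ∂μ := by
          rw [integral_const_mul, hTcmean, mul_zero, sub_zero]
  -- main covariance identity, coordinatewise
  have key : ∀ i, cov i = num * k i := by
    intro i
    have hZY : Integrable (fun ω => (X ω i - EX i) * Y ω) μ := aux_int_mul (hZ2 i) hY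
    have hZψ : Integrable (fun ω => (X ω i - EX i) * ψ ω) μ := aux_int_mul (hZ2 i) hψ₀int
    have hψZ : Integrable (fun ω => ψ ω * (X ω i - EX i)) μ := aux_int_mul hψ₀int (hZ2 i)
    -- step 1: decenter Y
    have step1 : cov i = ∫ ω, (X ω i - EX i) * Y ω ∂μ := by
      show (∫ ω, (X ω i - EX i) * (Y ω - ∫ ω', Y ω' ∂μ) ∂μ) = _
      calc ∫ ω, (X ω i - EX i) * (Y ω - ∫ ω', Y ω' ∂μ) ∂μ
          = ∫ ω, ((X ω i - EX i) * Y ω - (X ω i - EX i) * ∫ ω', Y ω' ∂μ) ∂μ := by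
            congr 1; ext ω; ring
        _ = ∫ ω, (X ω i - EX i) * Y ω ∂μ
              - ∫ ω, (X ω i - EX i) * ∫ ω', Y ω' ∂μ ∂μ := by
            rw [integral_sub hZY ((hZint i).mul_const _)]
        _ = ∫ ω, (X ω i - EX i) * Y ω ∂μ := by
            rw [integral_mul_const, hZmean i, zero_mul, sub_zero]
    -- step 2: condition on X
    have hZc : StronglyMeasurable[(MeasurableSpace.comap X inferInstance : MeasurableSpace Ω)] fun ω => X ω i - EX i :=
      (Measurable.stronglyMeasurable (Measurable.sub_const ((measurable_pi_apply i).comp hXc) (EX i)))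
    have step2 : ∫ ω, (X ω i - EX i) * Y ω ∂μ = ∫ ω, (X ω i - EX i) * ψ ω ∂μ := by
      rw [aux_integral_mul_condexp hm₁ hZc hZY (hY.integrable one_le_two)]
      refine integral_congr_ae ?_
      filter_upwards [hcondY] with ω hω
      rw [hω]
    -- step 3: condition on T
    have hpsic : StronglyMeasurable[(MeasurableSpace.comap T inferInstance : MeasurableSpace Ω)] ψ := Measurable.stronglyMeasurable (hψ₀.comp hTc)
    have step3 : ∫ ω, ψ ω * (X ω i - EX i) ∂μ
        = ∫ ω, ψ ω * ((T ω - α₀ ⬝ᵥ EX) * k i) ∂μ := by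
      rw [aux_integral_mul_condexp hm₂ hpsic hψZ (hZint i)]
      refine integral_congr_ae ?_
      filter_upwards [hlin i] with ω hω
      rw [hω, hdot_sub ω]
    calc cov i = ∫ ω, (X ω i - EX i) * ψ ω ∂μ := by rw [step1, step2]
      _ = ∫ ω, ψ ω * (X ω i - EX i) ∂μ := by congr 1; ext ω; ring
      _ = ∫ ω, ψ ω * ((T ω - α₀ ⬝ᵥ EX) * k i) ∂μ := step3
      _ = (∫ ω, ψ ω * (T ω - α₀ ⬝ᵥ EX) ∂μ) * k i := by
          simp_rw [← mul_assoc]; rw [integral_mul_const]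
      _ = num * k i := by rw [hnum]
  -- c * (Σα₀)ᵢ = num * kᵢ
  have hc : ∀ i, c * Sig.mulVec α₀ i = num * k i := by
    intro i
    show num / (α₀ ⬝ᵥ Sig.mulVec α₀) * Sig.mulVec α₀ i = num * k i
    rw [hk_def, div_eq_mul_inv]
    ring
  have hcov_eq : cov = c • Sig.mulVec α₀ := by
    funext i
    rw [key i, Pi.smul_apply, smul_eq_mul, hc i]
  refine ⟨hcov_eq, ?_⟩
  rw [hcov_eq]
  have hdet : IsUnit Sig.det := isUnit_iff_ne_zero.mpr hSig.det_pos.ne'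
  rw [Matrix.mulVec_smul, Matrix.mulVec_mulVec, Matrix.nonsing_inv_mul Sig hdet,
    Matrix.one_mulVec]
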